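/- Let d ≥ 1, let ρ be a positive definite d×d complex matrix with Tr(ρ) = d, let Y ∈ M_d(ℂ), t ≥ 0, and set ρ_t := e^{−t}·ρ + (1−e^{−t})·I. Then ∫₀¹ Tr(Y* ρ^s Y ρ^{1−s}) ds ≤ e^{(1−1/d)t} · ∫₀¹ Tr(Y* ρ_t^s Y ρ_t^{1−s}) ds, where real powers of positive definite matrices are defined by functional calculus. -/

import Mathlib

open scoped Matrix ComplexOrder



lemma continuousOn_of_fin {s : Set ℝ} (hs : s.Finite) (f : ℝ → ℝ) : ContinuousOn f s := by
  rw [continuousOn_iff_continuous_restrict]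
  have : Finite s := hs
  exact continuous_of_discreteTopology

lemma scalar_key {d : ℕ} (hd : 1 ≤ d) {t x : ℝ} (ht : 0 ≤ t) (hx : 0 < x) (hxd : x ≤ d) :
    x ≤ Real.exp ((1 - 1 / (d : ℝ)) * t) * (Real.exp (-t) * x + (1 - Real.exp (-t))) := by
  have hd' : (1:ℝ) ≤ d := by exact_mod_cast hd
  have hd0 : (0:ℝ) < d := lt_of_lt_of_le one_pos hd'
  have hconv : Real.exp (t / d) ≤ (1 / d) * Real.exp t + (1 - 1 / d) := by
    have ha : (0:ℝ) ≤ 1/(d:ℝ) := by positivity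
    have hb : (0:ℝ) ≤ 1 - 1/(d:ℝ) := by
      rw [sub_nonneg]; exact div_le_one_of_le₀ hd' hd0.le
    have h := convexOn_exp.2 (Set.mem_univ t) (Set.mem_univ 0) ha hb (by ring)
    simpa [smul_eq_mul, Real.exp_zero, one_div, inv_mul_eq_div] using h
  have hkey : x * (Real.exp (t / d) - 1) ≤ Real.exp t - 1 := by
    have h1 : (0:ℝ) ≤ Real.exp (t / d) - 1 := by
      have := Real.one_le_exp (by positivity : 0 ≤ t / d); linarith
    have h2 : x * (Real.exp (t / d) - 1) ≤ d * (Real.exp (t / d) - 1) :=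
      mul_le_mul_of_nonneg_right hxd h1
    have h3 : d * (Real.exp (t / d) - 1) ≤ Real.exp t - 1 := by
      have := mul_le_mul_of_nonneg_left hconv hd0.le
      field_simp at this ⊢
      nlinarith
    linarith
  have h2 : Real.exp (-(1 - 1/d) * t) * x ≤ Real.exp (-t) * x + (1 - Real.exp (-t)) := by
    have e1 : Real.exp (-(1 - 1/(d:ℝ)) * t) = Real.exp (-t) * Real.exp (t / d) := by
      rw [← Real.exp_add]; ring_nf
    have e2 : (1 - Real.exp (-t)) = Real.exp (-t) * (Real.exp t - 1) := by
      rw [mul_sub, ← Real.exp_add]; simp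
    rw [e1, e2]
    nlinarith [Real.exp_pos (-t)]
  calc x = Real.exp ((1 - 1/(d:ℝ)) * t) * (Real.exp (-(1 - 1/(d:ℝ)) * t) * x) := by
        rw [← mul_assoc, ← Real.exp_add,
          show (1 - 1/(d:ℝ)) * t + -(1 - 1/(d:ℝ)) * t = 0 by ring, Real.exp_zero, one_mul]
    _ ≤ _ := mul_le_mul_of_nonneg_left h2 (Real.exp_pos _).le


open Matrix in
lemma re_trace_sandwich {d : ℕ} (V Y : Matrix (Fin d) (Fin d) ℂ)
    (hV : V ∈ Matrix.unitaryGroup (Fin d) ℂ) (a b : Fin d → ℝ) :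
    ((Yᴴ * (V * Matrix.diagonal (fun i => (a i : ℂ)) * Vᴴ) * Y *
        (V * Matrix.diagonal (fun i => (b i : ℂ)) * Vᴴ)).trace).re
      = ∑ i, ∑ j, Complex.normSq ((Vᴴ * Y * V) i j) * a i * b j := by
  have h1 : Vᴴ * V = 1 := by
    simpa [Matrix.star_eq_conjTranspose] using (Matrix.mem_unitaryGroup_iff'.mp hV)
  have h2 : V * Vᴴ = 1 := by
    simpa [Matrix.star_eq_conjTranspose] using (Matrix.mem_unitaryGroup_iff.mp hV)
  have hc1 : ∀ X : Matrix (Fin d) (Fin d) ℂ, Vᴴ * (V * X) = X := fun X => by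
    rw [← Matrix.mul_assoc, h1, Matrix.one_mul]
  have hc2 : ∀ X : Matrix (Fin d) (Fin d) ℂ, V * (Vᴴ * X) = X := fun X => by
    rw [← Matrix.mul_assoc, h2, Matrix.one_mul]
  set Z := Vᴴ * Y * V with hZ
  set D₁ := Matrix.diagonal (fun i => (a i : ℂ)) with hD₁
  set D₂ := Matrix.diagonal (fun i => (b i : ℂ)) with hD₂
  have hY : Y = V * Z * Vᴴ := by
    rw [hZ]
    simp only [Matrix.mul_assoc, hc2]
    rw [h2, Matrix.mul_one]
  have hmat : Yᴴ * (V * D₁ * Vᴴ) * Y * (V * D₂ * Vᴴ) = V * (Zᴴ * D₁ * Z * D₂) * Vᴴ := by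
    conv_lhs => rw [hY]
    simp only [Matrix.conjTranspose_mul, Matrix.conjTranspose_conjTranspose]
    simp only [Matrix.mul_assoc, hc1, hc2]
  rw [hmat]
  have htr : (V * (Zᴴ * D₁ * Z * D₂) * Vᴴ).trace = (Zᴴ * D₁ * Z * D₂).trace := by
    rw [Matrix.trace_mul_cycle, ← Matrix.mul_assoc, h1, Matrix.one_mul]
  rw [htr]
  have hdiag : ∀ j, (Zᴴ * D₁ * Z * D₂) j j
      = ∑ k, star (Z k j) * (a k : ℂ) * Z k j * (b j : ℂ) := by
    intro j
    rw [hD₂, Matrix.mul_diagonal, hD₁, Matrix.mul_apply]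
    rw [Finset.sum_mul]
    refine Finset.sum_congr rfl fun k _ => ?_
    rw [Matrix.mul_diagonal, Matrix.conjTranspose_apply]
  have : (Zᴴ * D₁ * Z * D₂).trace
      = ((∑ j, ∑ k, Complex.normSq (Z k j) * a k * b j : ℝ) : ℂ) := by
    rw [Matrix.trace]
    push_cast
    refine Finset.sum_congr rfl fun j _ => ?_
    rw [Matrix.diag_apply, hdiag]
    refine Finset.sum_congr rfl fun k _ => ?_
    rw [Complex.star_def, Complex.normSq_eq_conj_mul_self]
    ring
  rw [this, Complex.ofReal_re]
  rw [Finset.sum_comm]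

lemma re_trace_cfc {d : ℕ} (ρ Y : Matrix (Fin d) (Fin d) ℂ) (hρ : ρ.IsHermitian)
    (f g : ℝ → ℝ) :
    ((Yᴴ * cfc f ρ * Y * cfc g ρ).trace).re
      = ∑ i, ∑ j,
          Complex.normSq
            (((hρ.eigenvectorUnitary : Matrix (Fin d) (Fin d) ℂ)ᴴ * Y *
              (hρ.eigenvectorUnitary : Matrix (Fin d) (Fin d) ℂ)) i j) *
          f (hρ.eigenvalues i) * g (hρ.eigenvalues j) := by
  rw [hρ.cfc_eq f, hρ.cfc_eq g]
  unfold Matrix.IsHermitian.cfc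
  have := re_trace_sandwich (hρ.eigenvectorUnitary : Matrix (Fin d) (Fin d) ℂ) Y
    (hρ.eigenvectorUnitary).2 (fun i => f (hρ.eigenvalues i)) (fun i => g (hρ.eigenvalues i))
  simpa [Matrix.star_eq_conjTranspose, Function.comp_def] using this



lemma cfc_flow {d : ℕ} (ρ : Matrix (Fin d) (Fin d) ℂ) (hρ : ρ.IsHermitian) (c k : ℝ)
    (f : ℝ → ℝ) :
    cfc f (c • ρ + k • (1 : Matrix (Fin d) (Fin d) ℂ))
      = cfc (fun x => f (c * x + k)) ρ := by
  have hsa : IsSelfAdjoint ρ := hρ.isSelfAdjoint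
  have h1 : cfc (fun x : ℝ => c * x + k) ρ = c • ρ + k • (1 : Matrix (Fin d) (Fin d) ℂ) := by
    rw [cfc_add_const k (fun x : ℝ => c * x) ρ (by fun_prop) hsa,
      cfc_const_mul_id c ρ hsa, Algebra.algebraMap_eq_smul_one]
  rw [← h1, ← cfc_comp' f (fun x : ℝ => c * x + k) ρ
    (hg := continuousOn_of_fin (Matrix.finite_real_spectrum.image _) f)
    (hf := by fun_prop) (ha := hsa)]


/-- The matrix content of Proposition 3.20: for a density `ρ` for the normalized trace
(`Tr(ρ) = d`), any matrix `Y`, `t ≥ 0` and the depolarizing flow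
`ρ_t = e^{-t}ρ + (1-e^{-t})·I`, the weighted L₂-norms satisfy
`∫₀¹ Tr(Y* ρ^s Y ρ^{1-s}) ds ≤ e^{(1-1/d)t} ∫₀¹ Tr(Y* ρ_t^s Y ρ_t^{1-s}) ds`,
real powers being taken by functional calculus (the traces appearing are real, so we
state the inequality for their real parts); this is the `(1/2 + 1/(2d))`-gradient
estimate for the depolarizing semigroup on `M_d`. -/
theorem depolarizing_Md_gradient_estimate
    (d : ℕ) (hd : 1 ≤ d) (ρ Y : Matrix (Fin d) (Fin d) ℂ)
    (hρ : ρ.PosDef) (hρtr : ρ.trace = (d : ℂ)) (t : ℝ) (ht : 0 ≤ t) :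
    ∫ s in (0:ℝ)..1,
        ((Yᴴ * cfc (fun x : ℝ => x ^ s) ρ * Y * cfc (fun x : ℝ => x ^ (1 - s)) ρ).trace).re ≤
      Real.exp ((1 - 1 / (d : ℝ)) * t) *
        ∫ s in (0:ℝ)..1,
          ((Yᴴ * cfc (fun x : ℝ => x ^ s)
                (Real.exp (-t) • ρ + (1 - Real.exp (-t)) • (1 : Matrix (Fin d) (Fin d) ℂ))
              * Y * cfc (fun x : ℝ => x ^ (1 - s))
                (Real.exp (-t) • ρ
                  + (1 - Real.exp (-t)) • (1 : Matrix (Fin d) (Fin d) ℂ))).trace).re := by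
  have hH : ρ.IsHermitian := hρ.1
  set lam : Fin d → ℝ := hH.eigenvalues with hlamdef
  set V : Matrix (Fin d) (Fin d) ℂ := (hH.eigenvectorUnitary : Matrix (Fin d) (Fin d) ℂ)
    with hVdef
  set w : Fin d → Fin d → ℝ := fun i j => Complex.normSq ((Vᴴ * Y * V) i j) with hwdef
  have hlpos : ∀ i, 0 < lam i := fun i => hρ.eigenvalues_pos i
  -- eigenvalues are bounded by d
  have hV1 : Vᴴ * V = 1 := by
    simpa [Matrix.star_eq_conjTranspose] using
      (Matrix.mem_unitaryGroup_iff'.mp hH.eigenvectorUnitary.2)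
  have htrace : ρ.trace = ∑ i, (lam i : ℂ) := by
    conv_lhs => rw [hH.spectral_theorem]
    rw [Unitary.conjStarAlgAut_apply, ← hVdef, ← hlamdef]
    rw [Matrix.trace_mul_cycle]
    rw [show star V = Vᴴ from rfl, hV1, Matrix.one_mul, Matrix.trace_diagonal]
    simp [Function.comp]
  have hsum : ∑ i, lam i = (d : ℝ) := by
    have h := hρtr
    rw [htrace] at h
    have := congrArg Complex.re h
    push_cast at this
    simpa using this
  have hld : ∀ i, lam i ≤ (d : ℝ) := by
    intro i
    rw [← hsum]
    exact Finset.single_le_sum (f := lam) (fun j _ => (hlpos j).le) (Finset.mem_univ i)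
  set M : ℝ := Real.exp ((1 - 1 / (d : ℝ)) * t) with hMdef
  have hMpos : 0 < M := Real.exp_pos _
  set c : ℝ := Real.exp (-t) with hcdef
  set k : ℝ := 1 - Real.exp (-t) with hkdef
  have hc : 0 < c := Real.exp_pos _
  have hk : 0 ≤ k := by
    rw [hkdef, sub_nonneg, ← Real.exp_zero]
    exact Real.exp_le_exp.mpr (by linarith)
  have hhpos : ∀ i, 0 < c * lam i + k := fun i => add_pos_of_pos_of_nonneg (mul_pos hc (hlpos i)) hk
  have hkeyi : ∀ i, lam i ≤ M * (c * lam i + k) := fun i =>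
    scalar_key hd ht (hlpos i) (hld i)
  set F : ℝ → ℝ := fun s => ∑ i, ∑ j, w i j * lam i ^ s * lam j ^ (1 - s) with hFdef
  set G : ℝ → ℝ := fun s =>
    ∑ i, ∑ j, w i j * (c * lam i + k) ^ s * (c * lam j + k) ^ (1 - s) with hGdef
  have contpow : ∀ (e : ℝ), 0 < e → Continuous (fun s : ℝ => e ^ s) := by
    intro e he
    have : (fun s : ℝ => e ^ s) = fun s => Real.exp (Real.log e * s) :=
      funext fun s => Real.rpow_def_of_pos he s
    rw [this]; fun_prop
  have contF : Continuous F := by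
    refine continuous_finset_sum _ fun i _ => continuous_finset_sum _ fun j _ => ?_
    exact (continuous_const.mul (contpow _ (hlpos i))).mul
      ((contpow _ (hlpos j)).comp (continuous_const.sub continuous_id))
  have contG : Continuous G := by
    refine continuous_finset_sum _ fun i _ => continuous_finset_sum _ fun j _ => ?_
    exact (continuous_const.mul (contpow _ (hhpos i))).mul
      ((contpow _ (hhpos j)).comp (continuous_const.sub continuous_id))
  have hle : ∀ s ∈ Set.Icc (0:ℝ) 1, F s ≤ M * G s := by
    intro s hs
    obtain ⟨hs0, hs1⟩ := hs
    rw [hFdef, hGdef]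
    simp only
    rw [Finset.mul_sum]
    refine Finset.sum_le_sum fun i _ => ?_
    rw [Finset.mul_sum]
    refine Finset.sum_le_sum fun j _ => ?_
    have e1 : lam i ^ s ≤ M ^ s * (c * lam i + k) ^ s := by
      rw [← Real.mul_rpow hMpos.le (hhpos i).le]
      exact Real.rpow_le_rpow (hlpos i).le (hkeyi i) hs0
    have e2 : lam j ^ (1 - s) ≤ M ^ (1 - s) * (c * lam j + k) ^ (1 - s) := by
      rw [← Real.mul_rpow hMpos.le (hhpos j).le]
      exact Real.rpow_le_rpow (hlpos j).le (hkeyi j) (by linarith)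
    have e3 : lam i ^ s * lam j ^ (1 - s)
        ≤ M * ((c * lam i + k) ^ s * (c * lam j + k) ^ (1 - s)) := by
      calc lam i ^ s * lam j ^ (1 - s)
          ≤ (M ^ s * (c * lam i + k) ^ s) * (M ^ (1 - s) * (c * lam j + k) ^ (1 - s)) := by
            exact mul_le_mul e1 e2 (Real.rpow_nonneg (hlpos j).le _)
              (mul_nonneg (Real.rpow_nonneg hMpos.le _) (Real.rpow_nonneg (hhpos i).le _))
        _ = (M ^ s * M ^ (1 - s)) * ((c * lam i + k) ^ s * (c * lam j + k) ^ (1 - s)) := by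
            ring
        _ = M * ((c * lam i + k) ^ s * (c * lam j + k) ^ (1 - s)) := by
            rw [← Real.rpow_add hMpos]; norm_num
    calc w i j * lam i ^ s * lam j ^ (1 - s)
        = w i j * (lam i ^ s * lam j ^ (1 - s)) := by ring
      _ ≤ w i j * (M * ((c * lam i + k) ^ s * (c * lam j + k) ^ (1 - s))) :=
          mul_le_mul_of_nonneg_left e3 (Complex.normSq_nonneg _)
      _ = M * (w i j * (c * lam i + k) ^ s * (c * lam j + k) ^ (1 - s)) := by ring
  have eqF : ∀ s : ℝ,
      ((Yᴴ * cfc (fun x : ℝ => x ^ s) ρ * Y * cfc (fun x : ℝ => x ^ (1 - s)) ρ).trace).re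
        = F s := fun s => re_trace_cfc ρ Y hH _ _
  have eqG : ∀ s : ℝ,
      ((Yᴴ * cfc (fun x : ℝ => x ^ s)
            (Real.exp (-t) • ρ + (1 - Real.exp (-t)) • (1 : Matrix (Fin d) (Fin d) ℂ))
          * Y * cfc (fun x : ℝ => x ^ (1 - s))
            (Real.exp (-t) • ρ
              + (1 - Real.exp (-t)) • (1 : Matrix (Fin d) (Fin d) ℂ))).trace).re
        = G s := by
    intro s
    rw [cfc_flow ρ hH _ _ (fun x : ℝ => x ^ s),
      cfc_flow ρ hH _ _ (fun x : ℝ => x ^ (1 - s))]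
    exact re_trace_cfc ρ Y hH _ _
  calc ∫ s in (0:ℝ)..1,
        ((Yᴴ * cfc (fun x : ℝ => x ^ s) ρ * Y * cfc (fun x : ℝ => x ^ (1 - s)) ρ).trace).re
      = ∫ s in (0:ℝ)..1, F s := by
        exact intervalIntegral.integral_congr fun s _ => eqF s
    _ ≤ ∫ s in (0:ℝ)..1, M * G s := by
        refine intervalIntegral.integral_mono_on zero_le_one
          (contF.intervalIntegrable 0 1)
          ((continuous_const.mul contG).intervalIntegrable 0 1) hle
    _ = M * ∫ s in (0:ℝ)..1, G s := intervalIntegral.integral_const_mul M G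
    _ = _ := by
        rw [intervalIntegral.integral_congr (fun s _ => (eqG s).symm)]
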